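/- (Corollary 2.2, gap bound for a closed curve.) Let ν ≥ 2, L > 0, and let γ : ℝ → ℝ^ν be a C², L-periodic curve parametrized by arc length (‖γ'(s)‖ = 1 for all s). Let V : ℝ → ℝ be continuous and L-periodic. Suppose u_1 : ℝ → ℝ is C², L-periodic, satisfies −u_1''(s) + V(s) u_1(s) = λ_1 u_1(s) for all s and ∫_0^L u_1(s)² ds = 1, and suppose λ_2 ∈ ℝ is such that every C², L-periodic φ : ℝ → ℝ with ∫_0^L φ(s) u_1(s) ds = 0 satisfies ∫_0^L (φ'(s)² + V(s) φ(s)²) ds ≥ λ_2 ∫_0^L φ(s)² ds. Then λ_2 − λ_1 ≤ 4 ∫_0^L ( u_1'(s)² + (‖γ''(s)‖²/4)·u_1(s)² ) ds. -/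

import Mathlib

open MeasureTheory intervalIntegral

private lemma aux_ftc {L : ℝ} {F F' : ℝ → ℝ} (hF : ∀ s, HasDerivAt F (F' s) s)
    (hcont : Continuous F') (hper : F L = F 0) : ∫ s in (0:ℝ)..L, F' s = 0 := by
  rw [intervalIntegral.integral_eq_sub_of_hasDerivAt (fun x _ => hF x)
    (hcont.intervalIntegrable _ _), hper, sub_self]

private lemma aux_deriv_per {E : Type*} [NormedAddCommGroup E] [NormedSpace ℝ E]
    {L : ℝ} {f : ℝ → E} (hf : Differentiable ℝ f) (hper : ∀ s, f (s + L) = f s) (s : ℝ) :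
    deriv f (s + L) = deriv f s := by
  have h1 : HasDerivAt (fun t : ℝ => f (t + L)) ((1:ℝ) • deriv f (s + L)) s :=
    (hf (s + L)).hasDerivAt.scomp s ((hasDerivAt_id s).add_const L)
  have h2 : HasDerivAt f (deriv f (s + L)) s := by
    have he : (fun t : ℝ => f (t + L)) = f := funext hper
    rw [he, one_smul] at h1; exact h1
  exact ((hf s).hasDerivAt.unique h2).symm

private lemma aux_cs {L : ℝ} (hL : 0 ≤ L) {P Q : ℝ → ℝ} (hP : Continuous P) (hQ : Continuous Q) :
    (∫ s in (0:ℝ)..L, P s * Q s) ^ 2 ≤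
      (∫ s in (0:ℝ)..L, P s ^ 2) * ∫ s in (0:ℝ)..L, Q s ^ 2 := by
  set A := ∫ s in (0:ℝ)..L, P s ^ 2 with hA
  set B := ∫ s in (0:ℝ)..L, P s * Q s with hB
  set C := ∫ s in (0:ℝ)..L, Q s ^ 2 with hC
  have key : ∀ x : ℝ, 0 ≤ A * (x * x) + (-2 * B) * x + C := by
    intro x
    have h0 : 0 ≤ ∫ s in (0:ℝ)..L, (x * P s - Q s) ^ 2 :=
      intervalIntegral.integral_nonneg hL (fun s _ => sq_nonneg _)
    have he : (∫ s in (0:ℝ)..L, (x * P s - Q s) ^ 2)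
        = A * (x * x) + (-2 * B) * x + C := by
      have hps : ∀ s ∈ Set.uIcc (0:ℝ) L, (x * P s - Q s) ^ 2
          = (x * x) * P s ^ 2 + (-2 * x) * (P s * Q s) + Q s ^ 2 := fun s _ => by ring
      rw [intervalIntegral.integral_congr hps,
        intervalIntegral.integral_add (f := fun s => x * x * P s ^ 2 + -2 * x * (P s * Q s))
          (g := fun s => Q s ^ 2) (((continuous_const.mul (hP.pow 2)).add
          (continuous_const.mul (hP.mul hQ))).intervalIntegrable _ _)
          ((hQ.pow 2).intervalIntegrable _ _),
        intervalIntegral.integral_add (f := fun s => x * x * P s ^ 2)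
          (g := fun s => -2 * x * (P s * Q s)) ((continuous_const.mul (hP.pow 2)).intervalIntegrable _ _)
          ((continuous_const.mul (hP.mul hQ)).intervalIntegrable _ _),
        intervalIntegral.integral_const_mul, intervalIntegral.integral_const_mul]
      ring
    linarith [h0, he ▸ h0]
  have hd := discrim_le_zero key
  rw [discrim] at hd
  nlinarith [hd]

theorem gap_bound_closed_curve {ν : ℕ} (hν : 2 ≤ ν) (L : ℝ) (hL : 0 < L)
    (γ : ℝ → EuclideanSpace ℝ (Fin ν)) (hγ : ContDiff ℝ 2 γ)
    (hγper : ∀ s : ℝ, γ (s + L) = γ s) (harc : ∀ s : ℝ, ‖deriv γ s‖ = 1)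
    (V : ℝ → ℝ) (hV : Continuous V) (hVper : ∀ s : ℝ, V (s + L) = V s)
    (u1 : ℝ → ℝ) (lam1 lam2 : ℝ)
    (hu1 : ContDiff ℝ 2 u1) (hu1per : ∀ s : ℝ, u1 (s + L) = u1 s)
    (heig : ∀ s : ℝ, -deriv (deriv u1) s + V s * u1 s = lam1 * u1 s)
    (hnorm : ∫ s in (0:ℝ)..L, (u1 s) ^ 2 = 1)
    (hlam2 : ∀ φ : ℝ → ℝ, ContDiff ℝ 2 φ → (∀ s : ℝ, φ (s + L) = φ s) →
      (∫ s in (0:ℝ)..L, φ s * u1 s) = 0 →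
      lam2 * ∫ s in (0:ℝ)..L, (φ s) ^ 2 ≤
        ∫ s in (0:ℝ)..L, ((deriv φ s) ^ 2 + V s * (φ s) ^ 2)) :
    lam2 - lam1 ≤
      4 * ∫ s in (0:ℝ)..L,
        ((deriv u1 s) ^ 2 + (‖deriv (deriv γ) s‖ ^ 2 / 4) * (u1 s) ^ 2) := by
  have h2 : (2 : WithTop ℕ∞) = 1 + 1 := by norm_num
  have hγd : Differentiable ℝ γ := hγ.differentiable (by norm_num)
  have hγ'c : ContDiff ℝ 1 (deriv γ) := (contDiff_succ_iff_deriv.mp (h2 ▸ hγ)).2.2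
  have hγ'd : Differentiable ℝ (deriv γ) := hγ'c.differentiable one_ne_zero
  have hγ''cont : Continuous (deriv (deriv γ)) := (contDiff_one_iff_deriv.mp hγ'c).2
  have hu1d : Differentiable ℝ u1 := hu1.differentiable (by norm_num)
  have hu1'c : ContDiff ℝ 1 (deriv u1) := (contDiff_succ_iff_deriv.mp (h2 ▸ hu1)).2.2
  have hu1'd : Differentiable ℝ (deriv u1) := hu1'c.differentiable one_ne_zero
  set u1' := deriv u1 with hu1'def
  have hcu : Continuous u1 := hu1.continuous
  have hcu' : Continuous u1' := hu1'c.continuous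
  have hu1H : ∀ s, HasDerivAt u1 (u1' s) s := fun s => (hu1d s).hasDerivAt
  have heq'' : ∀ s, deriv u1' s = V s * u1 s - lam1 * u1 s := fun s => by
    have := heig s; simp only [hu1'def]; linarith
  have hu1'H : ∀ s, HasDerivAt u1' (V s * u1 s - lam1 * u1 s) s := fun s =>
    heq'' s ▸ (hu1'd s).hasDerivAt
  -- components of γ
  have hGc : ∀ i : Fin ν, Continuous fun s => γ s i := fun i =>
    (EuclideanSpace.proj (𝕜 := ℝ) i).continuous.comp hγ.continuous
  have hGcd : ∀ i : Fin ν, ContDiff ℝ 2 fun s => γ s i := fun i =>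
    (EuclideanSpace.proj (𝕜 := ℝ) i).contDiff.comp hγ
  have hGd : ∀ (i : Fin ν) (s : ℝ), HasDerivAt (fun t => γ t i) (deriv γ s i) s := fun i s =>
    (EuclideanSpace.proj (𝕜 := ℝ) i).hasFDerivAt.comp_hasDerivAt s (hγd s).hasDerivAt
  have hG'd : ∀ (i : Fin ν) (s : ℝ), HasDerivAt (fun t => deriv γ t i) (deriv (deriv γ) s i) s :=
    fun i s => (EuclideanSpace.proj (𝕜 := ℝ) i).hasFDerivAt.comp_hasDerivAt s (hγ'd s).hasDerivAt
  have hG'c : ∀ i : Fin ν, Continuous fun s => deriv γ s i := fun i =>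
    (EuclideanSpace.proj (𝕜 := ℝ) i).continuous.comp hγ'c.continuous
  have hG''c : ∀ i : Fin ν, Continuous fun s => deriv (deriv γ) s i := fun i =>
    (EuclideanSpace.proj (𝕜 := ℝ) i).continuous.comp hγ''cont
  -- periodicity of derivatives
  have hγ'per : ∀ s, deriv γ (s + L) = deriv γ s := aux_deriv_per hγd hγper
  have hγ''per : ∀ s, deriv (deriv γ) (s + L) = deriv (deriv γ) s := aux_deriv_per hγ'd hγ'per
  have hu1'per : ∀ s, u1' (s + L) = u1' s := aux_deriv_per hu1d hu1per
  have hγL : γ L = γ 0 := by have := hγper 0; rwa [zero_add] at this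
  have hγ'L : deriv γ L = deriv γ 0 := by have := hγ'per 0; rwa [zero_add] at this
  have hu1L : u1 L = u1 0 := by have := hu1per 0; rwa [zero_add] at this
  have hu1'L : u1' L = u1' 0 := by have := hu1'per 0; rwa [zero_add] at this
  -- norm-squared identity
  have hnormsq : ∀ x : EuclideanSpace ℝ (Fin ν), ‖x‖ ^ 2 = ∑ i, (x i) ^ 2 := by
    intro x
    rw [EuclideanSpace.norm_eq, Real.sq_sqrt (by positivity)]
    exact Finset.sum_congr rfl fun i _ => by rw [Real.norm_eq_abs, sq_abs]
  have hsum1 : ∀ s, ∑ i, (deriv γ s i) ^ 2 = 1 := by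
    intro s
    have := hnormsq (deriv γ s)
    rw [harc s] at this; simpa using this.symm
  -- orthogonality of γ' and γ''
  have horth : ∀ s, ∑ i, deriv γ s i * deriv (deriv γ) s i = 0 := by
    intro s
    have hF : ∀ t, HasDerivAt (fun r => ∑ i, (deriv γ r i) ^ 2)
        (∑ i, ((deriv (deriv γ) t i) * deriv γ t i + deriv γ t i * deriv (deriv γ) t i)) t :=
      fun t => HasDerivAt.fun_sum fun i _ => by
        simpa [sq] using (hG'd i t).fun_mul (hG'd i t)
    have hconst : HasDerivAt (fun r => ∑ i, (deriv γ r i) ^ 2) 0 s := by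
      have : (fun r => ∑ i, (deriv γ r i) ^ 2) = fun _ => (1:ℝ) := funext fun r => hsum1 r
      rw [this]; exact hasDerivAt_const s 1
    have h0 := (hF s).unique hconst
    have : (2:ℝ) * ∑ i, deriv γ s i * deriv (deriv γ) s i = 0 := by
      rw [Finset.mul_sum]; rw [← h0]; exact Finset.sum_congr rfl fun i _ => by ring
    linarith
  -- the centering constants
  set c : Fin ν → ℝ := fun i => ∫ s in (0:ℝ)..L, γ s i * u1 s ^ 2 with hcdef
  -- continuity stock
  have hcφ : ∀ i, Continuous fun s => (γ s i - c i) * u1 s := fun i =>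
    ((hGc i).sub continuous_const).mul hcu
  have hcw : ∀ i, Continuous fun s => deriv (deriv γ) s i * u1 s + 2 * deriv γ s i * u1' s :=
    fun i => ((hG''c i).mul hcu).add ((continuous_const.mul (hG'c i)).mul hcu')
  -- test function derivative
  have hφd : ∀ (i : Fin ν) s, HasDerivAt (fun t => (γ t i - c i) * u1 t)
      (deriv γ s i * u1 s + (γ s i - c i) * u1' s) s := fun i s =>
    ((hGd i s).sub_const (c i)).mul (hu1H s)
  have hφderiv : ∀ (i : Fin ν) s, deriv (fun t => (γ t i - c i) * u1 t) s
      = deriv γ s i * u1 s + (γ s i - c i) * u1' s := fun i s => (hφd i s).deriv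
  -- orthogonality to u1
  have horthφ : ∀ i, (∫ s in (0:ℝ)..L, ((γ s i - c i) * u1 s) * u1 s) = 0 := by
    intro i
    have h1 : ∀ s ∈ Set.uIcc (0:ℝ) L, ((γ s i - c i) * u1 s) * u1 s
        = γ s i * u1 s ^ 2 - c i * u1 s ^ 2 := fun s _ => by ring
    rw [intervalIntegral.integral_congr h1,
      intervalIntegral.integral_sub (((hGc i).fun_mul (hcu.fun_pow 2)).intervalIntegrable _ _)
        ((continuous_const.fun_mul (hcu.fun_pow 2)).intervalIntegrable _ _),
      intervalIntegral.integral_const_mul, hnorm, hcdef]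
    ring
  -- ground state substitution identity
  have hgs : ∀ i : Fin ν, (∫ s in (0:ℝ)..L, ((deriv (fun t => (γ t i - c i) * u1 t) s) ^ 2
        + V s * ((γ s i - c i) * u1 s) ^ 2))
      = (∫ s in (0:ℝ)..L, (deriv γ s i) ^ 2 * u1 s ^ 2)
        + lam1 * ∫ s in (0:ℝ)..L, ((γ s i - c i) * u1 s) ^ 2 := by
    intro i
    -- D s = ((γ s i - c i) * (γ s i - c i)) * (u1 s * u1' s)
    have hDd : ∀ s, HasDerivAt (fun t => ((γ t i - c i) * (γ t i - c i)) * (u1 t * u1' t))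
        ((deriv γ s i * (γ s i - c i) + (γ s i - c i) * deriv γ s i) * (u1 s * u1' s)
          + ((γ s i - c i) * (γ s i - c i))
            * (u1' s * u1' s + u1 s * (V s * u1 s - lam1 * u1 s))) s := fun s =>
      (((hGd i s).sub_const (c i)).mul ((hGd i s).sub_const (c i))).mul
        ((hu1H s).mul (hu1'H s))
    have hDcont : Continuous fun s =>
        (deriv γ s i * (γ s i - c i) + (γ s i - c i) * deriv γ s i) * (u1 s * u1' s)
          + ((γ s i - c i) * (γ s i - c i))
            * (u1' s * u1' s + u1 s * (V s * u1 s - lam1 * u1 s)) :=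
      ((((hG'c i).mul ((hGc i).sub continuous_const)).add
          (((hGc i).sub continuous_const).mul (hG'c i))).mul (hcu.mul hcu')).add
        ((((hGc i).sub continuous_const).mul ((hGc i).sub continuous_const)).mul
          ((hcu'.mul hcu').add (hcu.mul ((hV.mul hcu).sub (continuous_const.mul hcu)))))
    have hDper : ((γ L i - c i) * (γ L i - c i)) * (u1 L * u1' L)
        = ((γ 0 i - c i) * (γ 0 i - c i)) * (u1 0 * u1' 0) := by
      rw [hγL, hu1L, hu1'L]
    have hD0 : (∫ s in (0:ℝ)..L,
        ((deriv γ s i * (γ s i - c i) + (γ s i - c i) * deriv γ s i) * (u1 s * u1' s)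
          + ((γ s i - c i) * (γ s i - c i))
            * (u1' s * u1' s + u1 s * (V s * u1 s - lam1 * u1 s)))) = 0 :=
      aux_ftc hDd hDcont hDper
    have hpt : ∀ s ∈ Set.uIcc (0:ℝ) L,
        (deriv (fun t => (γ t i - c i) * u1 t) s) ^ 2 + V s * ((γ s i - c i) * u1 s) ^ 2
        = ((deriv γ s i) ^ 2 * u1 s ^ 2 + lam1 * ((γ s i - c i) * u1 s) ^ 2)
          + ((deriv γ s i * (γ s i - c i) + (γ s i - c i) * deriv γ s i) * (u1 s * u1' s)
            + ((γ s i - c i) * (γ s i - c i))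
              * (u1' s * u1' s + u1 s * (V s * u1 s - lam1 * u1 s))) := by
      intro s _
      rw [hφderiv i s]; ring
    rw [intervalIntegral.integral_congr hpt,
      intervalIntegral.integral_add
        ((((hG'c i).fun_pow 2).fun_mul (hcu.fun_pow 2) |>.fun_add
          (continuous_const.fun_mul ((hcφ i).fun_pow 2))).intervalIntegrable _ _)
        (hDcont.intervalIntegrable _ _),
      hD0,
      intervalIntegral.integral_add
        ((((hG'c i).fun_pow 2).fun_mul (hcu.fun_pow 2)).intervalIntegrable _ _)
        ((continuous_const.fun_mul ((hcφ i).fun_pow 2)).intervalIntegrable _ _),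
      intervalIntegral.integral_const_mul]
    ring
  -- per-coordinate variational bound
  have key1 : ∀ i : Fin ν, (lam2 - lam1) * (∫ s in (0:ℝ)..L, ((γ s i - c i) * u1 s) ^ 2)
      ≤ ∫ s in (0:ℝ)..L, (deriv γ s i) ^ 2 * u1 s ^ 2 := by
    intro i
    have hcd : ContDiff ℝ 2 fun s => (γ s i - c i) * u1 s :=
      ((hGcd i).sub contDiff_const).mul hu1
    have hper : ∀ s, (γ (s + L) i - c i) * u1 (s + L) = (γ s i - c i) * u1 s := fun s => by
      rw [hγper s, hu1per s]
    have hv := hlam2 _ hcd hper (horthφ i)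
    rw [hgs i, sub_mul] at *
    linarith
  -- sum of squares of test functions
  set X := ∑ i, ∫ s in (0:ℝ)..L, ((γ s i - c i) * u1 s) ^ 2 with hXdef
  have hXnonneg : 0 ≤ X := Finset.sum_nonneg fun i _ =>
    intervalIntegral.integral_nonneg hL.le fun s _ => sq_nonneg _
  have hsumg' : ∑ i, ∫ s in (0:ℝ)..L, (deriv γ s i) ^ 2 * u1 s ^ 2 = 1 := by
    rw [← intervalIntegral.integral_finset_sum (fun i _ =>
      (((hG'c i).fun_pow 2).fun_mul (hcu.fun_pow 2)).intervalIntegrable _ _)]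
    have hpt : ∀ s ∈ Set.uIcc (0:ℝ) L, (∑ i, (deriv γ s i) ^ 2 * u1 s ^ 2) = u1 s ^ 2 := by
      intro s _; rw [← Finset.sum_mul, hsum1 s, one_mul]
    rw [intervalIntegral.integral_congr hpt, hnorm]
  have hstep1 : (lam2 - lam1) * X ≤ 1 := by
    rw [hXdef, Finset.mul_sum, ← hsumg']
    exact Finset.sum_le_sum fun i _ => key1 i
  -- key integration-by-parts identity, per coordinate
  have key2 : ∀ i : Fin ν, (∫ s in (0:ℝ)..L, (deriv γ s i) ^ 2 * u1 s ^ 2)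
      = -∫ s in (0:ℝ)..L, ((γ s i - c i) * u1 s)
          * (deriv (deriv γ) s i * u1 s + 2 * deriv γ s i * u1' s) := by
    intro i
    have hD2d : ∀ s, HasDerivAt (fun t => ((γ t i - c i) * deriv γ t i) * (u1 t * u1 t))
        ((deriv γ s i * deriv γ s i + (γ s i - c i) * deriv (deriv γ) s i) * (u1 s * u1 s)
          + ((γ s i - c i) * deriv γ s i) * (u1' s * u1 s + u1 s * u1' s)) s := fun s =>
      (((hGd i s).sub_const (c i)).mul (hG'd i s)).mul ((hu1H s).mul (hu1H s))
    have hD2cont : Continuous fun s =>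
        (deriv γ s i * deriv γ s i + (γ s i - c i) * deriv (deriv γ) s i) * (u1 s * u1 s)
          + ((γ s i - c i) * deriv γ s i) * (u1' s * u1 s + u1 s * u1' s) :=
      ((((hG'c i).mul (hG'c i)).add (((hGc i).sub continuous_const).mul (hG''c i))).mul
        (hcu.mul hcu)).add ((((hGc i).sub continuous_const).mul (hG'c i)).mul
        ((hcu'.mul hcu).add (hcu.mul hcu')))
    have hper : ((γ L i - c i) * deriv γ L i) * (u1 L * u1 L)
        = ((γ 0 i - c i) * deriv γ 0 i) * (u1 0 * u1 0) := by rw [hγL, hγ'L, hu1L]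
    have h0 := aux_ftc hD2d hD2cont hper
    have hpt : ∀ s ∈ Set.uIcc (0:ℝ) L,
        (deriv γ s i * deriv γ s i + (γ s i - c i) * deriv (deriv γ) s i) * (u1 s * u1 s)
          + ((γ s i - c i) * deriv γ s i) * (u1' s * u1 s + u1 s * u1' s)
        = (deriv γ s i) ^ 2 * u1 s ^ 2 + ((γ s i - c i) * u1 s)
            * (deriv (deriv γ) s i * u1 s + 2 * deriv γ s i * u1' s) := fun s _ => by ring
    rw [intervalIntegral.integral_congr hpt, intervalIntegral.integral_add
      ((((hG'c i).fun_pow 2).fun_mul (hcu.fun_pow 2)).intervalIntegrable _ _)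
      (((hcφ i).fun_mul (hcw i)).intervalIntegrable _ _)] at h0
    linarith
  -- 1 = -∫ S
  have hS : (1:ℝ) = -∫ s in (0:ℝ)..L, ∑ i, ((γ s i - c i) * u1 s)
      * (deriv (deriv γ) s i * u1 s + 2 * deriv γ s i * u1' s) := by
    rw [intervalIntegral.integral_finset_sum (fun i _ =>
      ((hcφ i).fun_mul (hcw i)).intervalIntegrable _ _), ← hsumg',
      Finset.sum_congr rfl fun i (_ : i ∈ Finset.univ) => key2 i]
    rw [← Finset.sum_neg_distrib]
  -- P and Q
  set P : ℝ → ℝ := fun s => Real.sqrt (∑ i, ((γ s i - c i) * u1 s) ^ 2) with hPdef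
  set Q : ℝ → ℝ := fun s => Real.sqrt (∑ i,
    (deriv (deriv γ) s i * u1 s + 2 * deriv γ s i * u1' s) ^ 2) with hQdef
  have hPc : Continuous P := (continuous_finset_sum _ fun i _ => (hcφ i).pow 2).sqrt
  have hQc : Continuous Q := (continuous_finset_sum _ fun i _ => (hcw i).pow 2).sqrt
  have hPsq : ∀ s, P s ^ 2 = ∑ i, ((γ s i - c i) * u1 s) ^ 2 := fun s =>
    Real.sq_sqrt (Finset.sum_nonneg fun i _ => sq_nonneg _)
  have hQsq : ∀ s, Q s ^ 2 = ∑ i,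
      (deriv (deriv γ) s i * u1 s + 2 * deriv γ s i * u1' s) ^ 2 := fun s =>
    Real.sq_sqrt (Finset.sum_nonneg fun i _ => sq_nonneg _)
  -- pointwise Cauchy-Schwarz
  have hptCS : ∀ s, -∑ i, ((γ s i - c i) * u1 s)
      * (deriv (deriv γ) s i * u1 s + 2 * deriv γ s i * u1' s) ≤ P s * Q s := by
    intro s
    have h1 := Finset.sum_mul_sq_le_sq_mul_sq Finset.univ
      (fun i => (γ s i - c i) * u1 s)
      (fun i => deriv (deriv γ) s i * u1 s + 2 * deriv γ s i * u1' s)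
    have hPQ : 0 ≤ P s * Q s := mul_nonneg (Real.sqrt_nonneg _) (Real.sqrt_nonneg _)
    have h2 : (∑ i, ((γ s i - c i) * u1 s)
        * (deriv (deriv γ) s i * u1 s + 2 * deriv γ s i * u1' s)) ^ 2
        ≤ (P s * Q s) ^ 2 := by rw [mul_pow, hPsq, hQsq]; exact h1
    have h3 := Real.sqrt_le_sqrt h2
    rw [Real.sqrt_sq_eq_abs, Real.sqrt_sq hPQ] at h3
    linarith [neg_abs_le (∑ i, ((γ s i - c i) * u1 s)
      * (deriv (deriv γ) s i * u1 s + 2 * deriv γ s i * u1' s))]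
  -- 1 ≤ ∫ P Q
  have hScont : Continuous fun s => ∑ i, ((γ s i - c i) * u1 s)
      * (deriv (deriv γ) s i * u1 s + 2 * deriv γ s i * u1' s) :=
    continuous_finset_sum _ fun i _ => (hcφ i).mul (hcw i)
  have hone : (1:ℝ) ≤ ∫ s in (0:ℝ)..L, P s * Q s := by
    rw [hS, ← intervalIntegral.integral_neg]
    exact intervalIntegral.integral_mono_on hL.le (hScont.neg.intervalIntegrable _ _)
      ((hPc.mul hQc).intervalIntegrable _ _) (fun s _ => hptCS s)
  have hintP : (∫ s in (0:ℝ)..L, P s ^ 2) = X := by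
    rw [intervalIntegral.integral_congr (fun s (_ : s ∈ Set.uIcc (0:ℝ) L) => hPsq s),
      intervalIntegral.integral_finset_sum (fun i _ =>
        ((hcφ i).fun_pow 2).intervalIntegrable _ _)]
  have hYnonneg : 0 ≤ ∫ s in (0:ℝ)..L,
      (u1' s ^ 2 + ‖deriv (deriv γ) s‖ ^ 2 / 4 * u1 s ^ 2) :=
    intervalIntegral.integral_nonneg hL.le fun s _ => by positivity
  have hintQ : (∫ s in (0:ℝ)..L, Q s ^ 2)
      = 4 * ∫ s in (0:ℝ)..L, (u1' s ^ 2 + ‖deriv (deriv γ) s‖ ^ 2 / 4 * u1 s ^ 2) := by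
    have hpt : ∀ s ∈ Set.uIcc (0:ℝ) L, Q s ^ 2
        = 4 * (u1' s ^ 2 + ‖deriv (deriv γ) s‖ ^ 2 / 4 * u1 s ^ 2) := by
      intro s _
      rw [hQsq s]
      have e1 : ∀ i : Fin ν, (deriv (deriv γ) s i * u1 s + 2 * deriv γ s i * u1' s) ^ 2
          = u1 s ^ 2 * (deriv (deriv γ) s i) ^ 2
            + (4 * (u1 s * u1' s)) * (deriv γ s i * deriv (deriv γ) s i)
            + (4 * u1' s ^ 2) * (deriv γ s i) ^ 2 := fun i => by ring
      rw [Finset.sum_congr rfl fun i (_ : i ∈ Finset.univ) => e1 i, Finset.sum_add_distrib,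
        Finset.sum_add_distrib, ← Finset.mul_sum, ← Finset.mul_sum, ← Finset.mul_sum,
        horth s, hsum1 s, hnormsq (deriv (deriv γ) s)]
      ring
    rw [intervalIntegral.integral_congr hpt, intervalIntegral.integral_const_mul]
  have hCS := aux_cs hL.le hPc hQc
  rw [hintP, hintQ] at hCS
  have hone2 : (1:ℝ) ≤ X * (4 * ∫ s in (0:ℝ)..L,
      (u1' s ^ 2 + ‖deriv (deriv γ) s‖ ^ 2 / 4 * u1 s ^ 2)) := by
    nlinarith [hone, hCS]
  rcases le_or_gt (lam2 - lam1) 0 with hd | hd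
  · linarith
  · nlinarith [mul_le_mul_of_nonneg_left hstep1 (by linarith : (0:ℝ) ≤ 4 * ∫ s in (0:ℝ)..L,
        (u1' s ^ 2 + ‖deriv (deriv γ) s‖ ^ 2 / 4 * u1 s ^ 2)),
      mul_le_mul_of_nonneg_left hone2 hd.le, hXnonneg]
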